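/- Let j₀ ∈ ℕ and let (u_j)_{j ≥ j₀} be a sequence of positive real numbers with Σ_{j ≥ j₀} u_j = ∞. Then there exists a sequence (L_j)_{j ≥ j₀} of dyadic intervals L_j = [s_j/2^j, t_j/2^j] with integers 0 ≤ s_j < 2^j and s_j ≤ t_j, such that: (i) |L_j| = o(u_j) as j → ∞ (i.e., |L_j|/u_j → 0); and (ii) every x ∈ [0,1] belongs to infinitely many of the intervals L_j. -/

import Mathlib

/-!
Covering `[0,1]` infinitely often by dyadic intervals of prescribed small lengths.
-/

open Filter Topology

namespace DyadicCoverAux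

/-- The left endpoints (as dyadic numerators) of the sweeping construction:
`dS j₀ n (j+1)` is `0` below generation `j₀`, continues the previous interval if it
did not overshoot `1`, and restarts at `0` otherwise. -/
def dS (j₀ : ℕ) (n : ℕ → ℕ) : ℕ → ℕ
  | 0 => 0
  | (j+1) => if j < j₀ then 0 else
      if dS j₀ n j + n j < 2 ^ j then 2 * (dS j₀ n j + n j) else 0

lemma dS_succ (j₀ : ℕ) (n : ℕ → ℕ) (j : ℕ) :
    dS j₀ n (j+1) = if j < j₀ then 0 else
      if dS j₀ n j + n j < 2 ^ j then 2 * (dS j₀ n j + n j) else 0 := rfl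

lemma dS_j₀ (j₀ : ℕ) (n : ℕ → ℕ) : dS j₀ n j₀ = 0 := by
  cases j₀ with
  | zero => rfl
  | succ k => rw [dS_succ]; simp

lemma dS_lt (j₀ : ℕ) (n : ℕ → ℕ) (hn : ∀ j, j₀ ≤ j → n j ≤ 2 ^ j) :
    ∀ j, j₀ ≤ j → dS j₀ n j < 2 ^ j := by
  intro j hj
  induction j, hj using Nat.le_induction with
  | base => rw [dS_j₀]; positivity
  | succ j hj ih =>
    rw [dS_succ, if_neg (by omega)]
    by_cases h : dS j₀ n j + n j < 2 ^ j
    · rw [if_pos h]; rw [pow_succ]; omega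
    · rw [if_neg h]; positivity

lemma dS_chain (j₀ : ℕ) (n : ℕ → ℕ) (j : ℕ) (hj : j₀ ≤ j)
    (h : dS j₀ n j + n j < 2 ^ j) : dS j₀ n (j+1) = 2 * (dS j₀ n j + n j) := by
  rw [dS_succ, if_neg (by omega), if_pos h]

lemma dS_reset (j₀ : ℕ) (n : ℕ → ℕ) (j : ℕ) (hj : j₀ ≤ j)
    (h : ¬ dS j₀ n j + n j < 2 ^ j) : dS j₀ n (j+1) = 0 := by
  rw [dS_succ, if_neg (by omega), if_neg h]

end DyadicCoverAux

open DyadicCoverAux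

/-- **Dyadic covering lemma.** If `(u_j)_{j ≥ j₀}` are positive reals with divergent sum,
there are dyadic intervals `L_j = [s_j/2^j, t_j/2^j]` (`s_j, t_j ∈ ℕ`, `0 ≤ s_j < 2^j`,
`s_j ≤ t_j`) with `|L_j| = o(u_j)` such that every point of `[0,1]` lies in infinitely
many `L_j`. -/
theorem dyadic_intervals_cover_infinitely_often
    (j₀ : ℕ) (u : ℕ → ℝ) (hu : ∀ j, j₀ ≤ j → 0 < u j)
    (hdiv : Tendsto (fun N => ∑ j ∈ Finset.Icc j₀ N, u j) atTop atTop) :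
    ∃ s t : ℕ → ℕ,
      (∀ j, j₀ ≤ j → s j < 2 ^ j ∧ s j ≤ t j) ∧
      Tendsto (fun j => (((t j : ℝ) - (s j : ℝ)) / 2 ^ j) / u j) atTop (𝓝 0) ∧
      ∀ x ∈ Set.Icc (0 : ℝ) 1,
        {j : ℕ | j₀ ≤ j ∧ x ∈ Set.Icc ((s j : ℝ) / 2 ^ j) ((t j : ℝ) / 2 ^ j)}.Infinite := by
  set S : ℕ → ℝ := fun N => ∑ j ∈ Finset.Icc j₀ N, u j with hS_def
  -- basic facts about S
  have hS_pos : ∀ j, j₀ ≤ j → 0 < S j := by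
    intro j hj
    exact Finset.sum_pos (fun i hi => hu i (Finset.mem_Icc.mp hi).1) ⟨j, Finset.mem_Icc.mpr ⟨hj, le_rfl⟩⟩
  have huS : ∀ j, j₀ ≤ j → u j ≤ S j := by
    intro j hj
    exact Finset.single_le_sum (fun i hi => (hu i (Finset.mem_Icc.mp hi).1).le)
      (Finset.mem_Icc.mpr ⟨hj, le_rfl⟩)
  have hS_split : ∀ N N', j₀ ≤ N → N ≤ N' →
      S N' = S N + ∑ j ∈ Finset.Ioc N N', u j := by
    intro N N' hN hNN'
    have hset : Finset.Icc j₀ N' = Finset.Icc j₀ N ∪ Finset.Ioc N N' := by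
      ext i; simp only [Finset.mem_Icc, Finset.mem_union, Finset.mem_Ioc]; omega
    rw [hS_def]
    simp only
    rw [hset, Finset.sum_union (by
      rw [Finset.disjoint_left]; intro i hi hi'
      simp only [Finset.mem_Icc] at hi; simp only [Finset.mem_Ioc] at hi'; omega)]
  have hS_mono : ∀ i j, j₀ ≤ i → i ≤ j → S i ≤ S j := by
    intro i j hi hij
    rw [hS_split i j hi hij]
    have : 0 ≤ ∑ k ∈ Finset.Ioc i j, u k :=
      Finset.sum_nonneg (fun k hk => (hu k (by have := (Finset.mem_Ioc.mp hk).1; omega)).le)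
    linarith
  -- the lengths
  set n : ℕ → ℕ := fun j => ⌊2 ^ j * u j / S j⌋₊ with hn_def
  have hn_le : ∀ j, j₀ ≤ j → (n j : ℝ) ≤ 2 ^ j * u j / S j := by
    intro j hj
    exact Nat.floor_le (div_nonneg (mul_nonneg (by positivity) (hu j hj).le) (hS_pos j hj).le)
  have hn_ge : ∀ j, j₀ ≤ j → 2 ^ j * u j / S j - 1 ≤ (n j : ℝ) := by
    intro j hj
    exact (Nat.sub_one_lt_floor _).le
  have hn_le2 : ∀ j, j₀ ≤ j → n j ≤ 2 ^ j := by
    intro j hj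
    have h1 : (2:ℝ) ^ j * u j / S j ≤ ((2 ^ j : ℕ) : ℝ) := by
      push_cast
      rw [div_le_iff₀ (hS_pos j hj)]
      have := huS j hj
      have h2 : (0:ℝ) < 2 ^ j := by positivity
      nlinarith
    calc n j ≤ ⌊((2 ^ j : ℕ) : ℝ)⌋₊ := Nat.floor_le_floor h1
      _ = 2 ^ j := Nat.floor_natCast _
  -- the construction
  set s : ℕ → ℕ := dS j₀ n with hs_def
  set t : ℕ → ℕ := fun j => s j + n j with ht_def
  have hs_lt : ∀ j, j₀ ≤ j → s j < 2 ^ j := dS_lt j₀ n hn_le2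
  have ht_eq : ∀ j, t j = s j + n j := fun j => rfl
  refine ⟨s, t, fun j hj => ⟨hs_lt j hj, by rw [ht_eq]; omega⟩, ?_, ?_⟩
  · -- the o(u_j) bound, by squeezing between 0 and (S j)⁻¹
    apply squeeze_zero' (f := fun j => (((t j : ℝ) - (s j : ℝ)) / 2 ^ j) / u j)
      (g := fun j => (S j)⁻¹)
    · filter_upwards [eventually_ge_atTop j₀] with j hj
      have h2 : (0:ℝ) < 2 ^ j := by positivity
      have hts : ((t j : ℝ) - (s j : ℝ)) = (n j : ℝ) := by rw [ht_eq]; push_cast; ring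
      rw [hts]
      exact div_nonneg (div_nonneg (Nat.cast_nonneg _) h2.le) (hu j hj).le
    · filter_upwards [eventually_ge_atTop j₀] with j hj
      have h2 : (0:ℝ) < 2 ^ j := by positivity
      have hSj := hS_pos j hj
      have huj := hu j hj
      have hts : ((t j : ℝ) - (s j : ℝ)) = (n j : ℝ) := by rw [ht_eq]; push_cast; ring
      rw [hts]
      calc ((n j : ℝ) / 2 ^ j) / u j ≤ ((2 ^ j * u j / S j) / 2 ^ j) / u j := by
            gcongr
            exact hn_le j hj
        _ = (S j)⁻¹ := by field_simp
    · exact hdiv.inv_tendsto_atTop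
  · -- the covering property
    -- divergence of ∑ u j / S j in blocks
    have hblock : ∀ J, j₀ ≤ J → ∀ k : ℕ, ∃ N, J ≤ N ∧
        (k : ℝ) / 2 ≤ ∑ j ∈ Finset.Ioc J N, u j / S j := by
      intro J hJ k
      induction k with
      | zero => exact ⟨J, le_rfl, by simp⟩
      | succ k ih =>
        obtain ⟨N, hJN, hN⟩ := ih
        have hN0 : j₀ ≤ N := le_trans hJ hJN
        obtain ⟨N', hN'⟩ := ((eventually_ge_atTop N).and
          (hdiv.eventually_ge_atTop (2 * S N))).exists
        obtain ⟨hNN', hSN'⟩ := hN'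
        have hSN' : 2 * S N ≤ S N' := hSN'
        have hN'0 : j₀ ≤ N' := le_trans hN0 hNN'
        have hSNpos := hS_pos N hN0
        have hSN'pos := hS_pos N' hN'0
        refine ⟨N', le_trans hJN hNN', ?_⟩
        have hsplit : ∑ j ∈ Finset.Ioc J N', u j / S j
            = (∑ j ∈ Finset.Ioc J N, u j / S j) + ∑ j ∈ Finset.Ioc N N', u j / S j := by
          rw [← Finset.sum_Ioc_consecutive _ hJN hNN']
        have hterm : ∀ j ∈ Finset.Ioc N N', u j / S N' ≤ u j / S j := by
          intro j hj
          obtain ⟨h1, h2⟩ := Finset.mem_Ioc.mp hj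
          have hj0 : j₀ ≤ j := by omega
          exact div_le_div_of_nonneg_left (hu j hj0).le (hS_pos j hj0) (hS_mono j N' hj0 h2)
        have hlower : (1:ℝ)/2 ≤ ∑ j ∈ Finset.Ioc N N', u j / S j := by
          calc (1:ℝ)/2 ≤ (S N' - S N) / S N' := by
                rw [le_div_iff₀ hSN'pos]; linarith
            _ = ∑ j ∈ Finset.Ioc N N', u j / S N' := by
                rw [← Finset.sum_div]
                congr 1
                have := hS_split N N' hN0 hNN'
                linarith
            _ ≤ ∑ j ∈ Finset.Ioc N N', u j / S j := Finset.sum_le_sum hterm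
        rw [hsplit]
        push_cast
        linarith
    -- every pass terminates: there is always a later index where the interval reaches 1
    have hpassEnds : ∀ J, j₀ ≤ J → ∃ N, J ≤ N ∧ 2 ^ N ≤ t N := by
      intro J hJ
      by_contra hcon
      push_neg at hcon
      have hlt : ∀ j, J ≤ j → t j < 2 ^ j := fun j hj => hcon j hj
      -- along the pass, endpoints accumulate the lengths
      have hchain : ∀ m : ℕ, ((t (J + m) : ℝ)) / 2 ^ (J + m)
          = (t J : ℝ) / 2 ^ J + ∑ j ∈ Finset.Ioc J (J + m), (n j : ℝ) / 2 ^ j := by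
        intro m
        induction m with
        | zero => simp
        | succ m ih =>
          have hJm : j₀ ≤ J + m := by omega
          have hstep : s (J + m + 1) = 2 * (s (J + m) + n (J + m)) :=
            dS_chain j₀ n (J + m) hJm (by
              have := hlt (J + m) (by omega); rw [ht_eq] at this; exact this)
          have h2m : (0:ℝ) < 2 ^ (J + m) := by positivity
          have : ((t (J + (m+1)) : ℝ)) / 2 ^ (J + (m+1))
              = (t (J + m) : ℝ) / 2 ^ (J + m) + (n (J + m + 1) : ℝ) / 2 ^ (J + m + 1) := by
            have hco : J + (m + 1) = (J + m) + 1 := by omega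
            rw [hco, ht_eq, hstep, ht_eq]
            push_cast
            rw [pow_succ]
            field_simp
          rw [this, ih, show J + (m+1) = (J+m) + 1 from rfl,
            Finset.sum_Ioc_succ_top (by omega : J ≤ J + m)]
          ring
      -- but the lengths diverge
      obtain ⟨N, hJN, hN⟩ := hblock J hJ 6
      have hN0 : j₀ ≤ N := le_trans hJ hJN
      -- compare n j / 2^j with u j / S j - (1/2)^j
      have hterm : ∀ j ∈ Finset.Ioc J N, u j / S j - (1/2 : ℝ) ^ j ≤ (n j : ℝ) / 2 ^ j := by
        intro j hj
        obtain ⟨h1, h2⟩ := Finset.mem_Ioc.mp hj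
        have hj0 : j₀ ≤ j := by omega
        have h2j : (0:ℝ) < 2 ^ j := by positivity
        have e : (1/2:ℝ)^j = 1/2^j := by rw [div_pow, one_pow]
        rw [e, sub_le_iff_le_add, ← add_div, le_div_iff₀ h2j]
        have hcomm : (2:ℝ)^j * u j / S j = u j / S j * 2^j := by ring
        linarith [hn_ge j hj0]
      have hgeo : ∑ j ∈ Finset.Ioc J N, (1/2 : ℝ) ^ j ≤ 2 := by
        calc ∑ j ∈ Finset.Ioc J N, (1/2 : ℝ) ^ j
            ≤ ∑ j ∈ Finset.range (N + 1), (1/2 : ℝ) ^ j := by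
              apply Finset.sum_le_sum_of_subset_of_nonneg
              · intro i hi
                simp only [Finset.mem_Ioc] at hi
                simp only [Finset.mem_range]
                omega
              · intro i _ _
                positivity
          _ ≤ 2 := sum_geometric_two_le _
      have hsum : (1:ℝ) ≤ ∑ j ∈ Finset.Ioc J N, (n j : ℝ) / 2 ^ j := by
        have h1 : ∑ j ∈ Finset.Ioc J N, (u j / S j - (1/2 : ℝ) ^ j)
            ≤ ∑ j ∈ Finset.Ioc J N, (n j : ℝ) / 2 ^ j := Finset.sum_le_sum hterm
        rw [Finset.sum_sub_distrib] at h1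
        norm_num at hN
        linarith
      have hub : ((t N : ℝ)) / 2 ^ N < 1 := by
        have h2N : (0:ℝ) < 2 ^ N := by positivity
        rw [div_lt_one h2N]
        exact_mod_cast (by exact_mod_cast hlt N hJN : (t N : ℝ) < ((2 ^ N : ℕ) : ℝ))
      have hlb : (t J : ℝ) / 2 ^ J ≥ 0 := by positivity
      have := hchain (N - J)
      rw [show J + (N - J) = N from by omega] at this
      linarith
    -- a pass starting at 0 covers everything up to the running endpoint
    have hpassCovers : ∀ K, j₀ ≤ K → s K = 0 → ∀ m : ℕ,
        (∀ j, K ≤ j → j < K + m → t j < 2 ^ j) →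
        ∀ x : ℝ, 0 ≤ x → x ≤ (t (K + m) : ℝ) / 2 ^ (K + m) →
        ∃ j, K ≤ j ∧ j ≤ K + m ∧ (s j : ℝ) / 2 ^ j ≤ x ∧ x ≤ (t j : ℝ) / 2 ^ j := by
      intro K hK hsK m
      induction m with
      | zero =>
        intro _ x hx0 hx1
        exact ⟨K, le_rfl, le_rfl, by rw [hsK]; simpa using hx0, by simpa using hx1⟩
      | succ m ih =>
        intro hlt x hx0 hx1
        by_cases hcase : x ≤ (t (K + m) : ℝ) / 2 ^ (K + m)
        · obtain ⟨j, h1, h2, h3, h4⟩ := ih (fun j hj hj' => hlt j hj (by omega)) x hx0 hcase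
          exact ⟨j, h1, by omega, h3, h4⟩
        · push_neg at hcase
          have hKm : j₀ ≤ K + m := by omega
          have hstep : s (K + m + 1) = 2 * (s (K + m) + n (K + m)) :=
            dS_chain j₀ n (K + m) hKm (by
              have := hlt (K + m) (by omega) (by omega); rw [ht_eq] at this; exact this)
          have hleft : (s (K + m + 1) : ℝ) / 2 ^ (K + m + 1) = (t (K + m) : ℝ) / 2 ^ (K + m) := by
            rw [hstep, ht_eq]
            push_cast
            rw [pow_succ]
            field_simp
          refine ⟨K + m + 1, by omega, by omega, ?_, ?_⟩
          · rw [hleft]; exact hcase.le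
          · exact hx1
    -- conclusion: every x in [0,1] is covered infinitely often
    intro x hx
    obtain ⟨hx0, hx1⟩ := hx
    by_contra hfin
    rw [Set.not_infinite] at hfin
    obtain ⟨J, hJ⟩ := hfin.bddAbove
    -- find a pass starting after J
    obtain ⟨N, hN1, hN2⟩ := hpassEnds (max (J + 1) j₀) (le_max_right _ _)
    have hN0 : j₀ ≤ N := le_trans (le_max_right _ _) hN1
    set K := N + 1 with hK_def
    have hK0 : j₀ ≤ K := by omega
    have hsK : s K = 0 := dS_reset j₀ n N hN0 (by rw [ht_eq] at hN2; show ¬ s N + n N < 2 ^ N; omega)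
    -- find the end of this pass, minimally
    obtain ⟨N₂, hN₂1, hN₂2⟩ := hpassEnds K hK0
    have hex : ∃ m : ℕ, 2 ^ (K + m) ≤ t (K + m) :=
      ⟨N₂ - K, by rw [show K + (N₂ - K) = N₂ from by omega]; exact hN₂2⟩
    set M := Nat.find hex with hM_def
    have hMspec : 2 ^ (K + M) ≤ t (K + M) := Nat.find_spec hex
    have hMmin : ∀ j, K ≤ j → j < K + M → t j < 2 ^ j := by
      intro j hj1 hj2
      have := Nat.find_min hex (m := j - K) (by omega)
      rw [show K + (j - K) = j from by omega] at this
      omega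
    have hx1' : x ≤ (t (K + M) : ℝ) / 2 ^ (K + M) := by
      have h2 : (0:ℝ) < 2 ^ (K + M) := by positivity
      rw [le_div_iff₀ h2]
      calc x * 2 ^ (K + M) ≤ 1 * 2 ^ (K + M) := by nlinarith
        _ = ((2 ^ (K + M) : ℕ) : ℝ) := by push_cast; ring
        _ ≤ (t (K + M) : ℝ) := by exact_mod_cast hMspec
    obtain ⟨j, hj1, hj2, hj3, hj4⟩ := hpassCovers K hK0 hsK M hMmin x hx0 hx1'
    have hjmem : j ∈ {j : ℕ | j₀ ≤ j ∧ x ∈ Set.Icc ((s j : ℝ) / 2 ^ j) ((t j : ℝ) / 2 ^ j)} :=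
      ⟨by omega, hj3, hj4⟩
    have := hJ hjmem
    have : J + 1 ≤ max (J + 1) j₀ := le_max_left _ _
    omega
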